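/- Let Y be standard normal, ρ ∈ (0,1), p ∈ (0,1), and define Z = Φ((Φ^{-1}(p) + √ρ · Y)/√(1-ρ)). Then E[Z] = p. -/

import Mathlib

open MeasureTheory Real Set Filter

noncomputable def stdNormalPdf (y : ℝ) : ℝ := Real.exp (-y ^ 2 / 2) / Real.sqrt (2 * Real.pi)

noncomputable def stdNormalCdf (x : ℝ) : ℝ := ∫ y in Set.Iic x, stdNormalPdf y

noncomputable def stdNormalInv : ℝ → ℝ := Function.invFun stdNormalCdf

lemma stdNormalPdf_eq' :
    stdNormalPdf = fun y => (Real.sqrt (2 * Real.pi))⁻¹ * Real.exp (-(1/2) * y ^ 2) := by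
  funext y; rw [stdNormalPdf]; ring_nf

lemma continuous_stdNormalPdf : Continuous stdNormalPdf := by
  rw [stdNormalPdf_eq']
  fun_prop

lemma integrable_stdNormalPdf : Integrable stdNormalPdf := by
  rw [stdNormalPdf_eq']
  exact (integrable_exp_neg_mul_sq (by norm_num : (0:ℝ) < 1/2)).const_mul _

lemma integral_stdNormalPdf : ∫ y, stdNormalPdf y = 1 := by
  rw [stdNormalPdf_eq']
  rw [integral_const_mul, integral_gaussian,
    show π / (1/2) = 2 * π by ring, ← Real.sqrt_inv,
    ← Real.sqrt_mul (by positivity), inv_mul_cancel₀ (by positivity), Real.sqrt_one]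

lemma stdNormalPdf_nonneg (y : ℝ) : 0 ≤ stdNormalPdf y := by
  rw [stdNormalPdf]; positivity

lemma integrable_stdNormalPdf_affine (c : ℝ) {t : ℝ} (ht : t ≠ 0) :
    Integrable fun y => stdNormalPdf ((y + c) / t) := by
  have h := (integrable_stdNormalPdf.comp_div ht).comp_add_right c
  simpa using h

lemma integral_stdNormalPdf_affine (c : ℝ) {t : ℝ} (ht : 0 < t) :
    ∫ y, stdNormalPdf ((y + c) / t) = t := by
  rw [integral_add_right_eq_self (fun y => stdNormalPdf (y / t)) c,
    Measure.integral_comp_div stdNormalPdf t, integral_stdNormalPdf, smul_eq_mul,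
    mul_one, abs_of_pos ht]

/-- Change of variables for Iic set integrals under an affine map. -/
lemma setIntegral_Iic_affine (g : ℝ → ℝ) (a c : ℝ) {t : ℝ} (ht : 0 < t) :
    ∫ u in Iic a, g ((u + c) / t) = t * ∫ x in Iic ((a + c) / t), g x := by
  have hmeas : ∀ b : ℝ, MeasurableSet (Iic b) := fun b => measurableSet_Iic
  rw [← integral_indicator (hmeas a), ← integral_indicator (hmeas ((a + c) / t))]
  have hpre : (fun u : ℝ => (u + c) / t) ⁻¹' (Iic ((a + c) / t)) = Iic a := by
    ext u
    simp only [mem_preimage, mem_Iic]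
    rw [div_le_div_iff_of_pos_right ht]
    constructor <;> intro h <;> linarith
  have hind : (Iic a).indicator (fun u => g ((u + c) / t)) =
      fun u => (Iic ((a + c) / t)).indicator g ((u + c) / t) := by
    funext u
    rw [← hpre]
    exact Set.indicator_comp_right (fun u : ℝ => (u + c) / t)
  rw [hind]
  set h := (Iic ((a + c) / t)).indicator g with hh
  rw [integral_add_right_eq_self (fun y => h (y / t)) c, Measure.integral_comp_div h t,
    smul_eq_mul, abs_of_pos ht]

/-- The key algebraic symmetry. -/
lemma pdf_symm {s t : ℝ} (hst : s ^ 2 + t ^ 2 = 1) (ht : t ≠ 0) (y u : ℝ) :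
    stdNormalPdf y * stdNormalPdf ((u + s * y) / t) =
    stdNormalPdf u * stdNormalPdf ((y + s * u) / t) := by
  have key : -y ^ 2 / 2 + -((u + s * y) / t) ^ 2 / 2 =
      -u ^ 2 / 2 + -((y + s * u) / t) ^ 2 / 2 := by
    field_simp
    linear_combination (u ^ 2 - y ^ 2) * hst
  simp only [stdNormalPdf, div_mul_div_comm, ← Real.exp_add, key]

lemma stdNormalCdf_le_one_aux (a : ℝ) : stdNormalCdf a = ∫ y in Iic a, stdNormalPdf y := rfl

lemma continuous_stdNormalCdf : Continuous stdNormalCdf := by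
  have key : ∀ x : ℝ, stdNormalCdf x = stdNormalCdf 0 + ∫ u in (0:ℝ)..x, stdNormalPdf u := by
    intro x
    have := intervalIntegral.integral_Iic_sub_Iic
      (integrable_stdNormalPdf.integrableOn (s := Iic 0))
      (integrable_stdNormalPdf.integrableOn (s := Iic x))
    rw [stdNormalCdf, stdNormalCdf]
    linarith [this]
  have : Continuous fun x => stdNormalCdf 0 + ∫ u in (0:ℝ)..x, stdNormalPdf u :=
    continuous_const.add (integrable_stdNormalPdf.continuous_primitive 0)
  exact this.congr fun x => (key x).symm

lemma tendsto_stdNormalCdf_atTop : Tendsto stdNormalCdf atTop (nhds 1) := by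
  have h := tendsto_setIntegral_of_monotone (μ := volume) (f := stdNormalPdf)
    (s := fun x : ℝ => Iic x) (fun x => measurableSet_Iic)
    (fun x y hxy => Iic_subset_Iic.mpr hxy) ?_
  · have hU : ⋃ x : ℝ, Iic x = univ := iUnion_Iic
    rw [hU] at h
    have h' : Tendsto (fun i : ℝ => ∫ x in Iic i, stdNormalPdf x) atTop (nhds 1) := by
      simpa [integral_stdNormalPdf] using h
    exact h'
  · rw [iUnion_Iic]
    exact integrable_stdNormalPdf.integrableOn

lemma tendsto_stdNormalCdf_atBot : Tendsto stdNormalCdf atBot (nhds 0) := by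
  have h := tendsto_setIntegral_of_antitone (μ := volume) (f := stdNormalPdf)
    (s := fun x : ℝ => Iic (-x)) (fun x => measurableSet_Iic)
    (fun x y hxy => Iic_subset_Iic.mpr (by linarith)) ⟨0, integrable_stdNormalPdf.integrableOn⟩
  have hI : ⋂ x : ℝ, Iic (-x) = ∅ := by
    ext z
    simp only [mem_iInter, mem_Iic, mem_empty_iff_false, iff_false, not_forall]
    exact ⟨-(z - 1), by push_neg; linarith⟩
  rw [hI] at h
  simp only [Measure.restrict_empty, integral_zero_measure] at h
  have : Tendsto (fun x : ℝ => stdNormalCdf (-x)) atTop (nhds 0) := h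
  have h2 := this.comp tendsto_neg_atBot_atTop
  have heq : ((fun x : ℝ => stdNormalCdf (-x)) ∘ Neg.neg) = stdNormalCdf := by
    funext x; simp
  rwa [heq] at h2

set_option maxHeartbeats 1000000 in
lemma stdNormalCdf_inv (p : ℝ) (hp : p ∈ Set.Ioo (0:ℝ) 1) :
    stdNormalCdf (stdNormalInv p) = p := by
  obtain ⟨hp0, hp1⟩ := hp
  have hb : ∃ b, stdNormalCdf b < p := by
    have := tendsto_stdNormalCdf_atBot.eventually_lt_const hp0
    exact this.exists
  have hc : ∃ c, p < stdNormalCdf c := by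
    have := tendsto_stdNormalCdf_atTop.eventually_const_lt hp1
    exact this.exists
  obtain ⟨b, hb⟩ := hb
  obtain ⟨c, hc⟩ := hc
  have : p ∈ Icc (stdNormalCdf b) (stdNormalCdf c) := ⟨hb.le, hc.le⟩
  have hrange : p ∈ Set.range stdNormalCdf :=
    intermediate_value_univ b c continuous_stdNormalCdf this
  exact Function.invFun_eq hrange

set_option maxHeartbeats 2000000 in
theorem vasicek_mean (ρ p : ℝ) (hρ : ρ ∈ Set.Ioo (0:ℝ) 1) (hp : p ∈ Set.Ioo (0:ℝ) 1) :
    ∫ y : ℝ, stdNormalPdf y *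
      stdNormalCdf ((stdNormalInv p + Real.sqrt ρ * y) / Real.sqrt (1 - ρ)) = p := by
  obtain ⟨hρ0, hρ1⟩ := hρ
  set s := Real.sqrt ρ with hs
  set t := Real.sqrt (1 - ρ) with htdef
  have ht : 0 < t := Real.sqrt_pos.mpr (by linarith)
  have hst : s ^ 2 + t ^ 2 = 1 := by
    rw [hs, htdef, Real.sq_sqrt hρ0.le, Real.sq_sqrt (by linarith)]
    ring
  set A := stdNormalInv p with hA
  clear_value s t A
  have hAp : stdNormalCdf A = p := by rw [hA]; exact stdNormalCdf_inv p hp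
  -- Step 1: rewrite the cdf as a set integral via affine change of variables
  have step1 : ∀ y : ℝ, stdNormalPdf y * stdNormalCdf ((A + s * y) / t) =
      ∫ u in Iic A, stdNormalPdf y * (stdNormalPdf ((u + s * y) / t) / t) := by
    intro y
    rw [integral_const_mul]
    congr 1
    have h := setIntegral_Iic_affine stdNormalPdf A (s * y) ht
    calc stdNormalCdf ((A + s * y) / t)
        = (t * ∫ x in Iic ((A + s * y) / t), stdNormalPdf x) / t := by
          rw [stdNormalCdf_le_one_aux, mul_div_cancel_left₀ _ ht.ne']
      _ = (∫ u in Iic A, stdNormalPdf ((u + s * y) / t)) / t := by rw [h]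
      _ = ∫ u in Iic A, stdNormalPdf ((u + s * y) / t) / t := (integral_div _ _).symm
  simp_rw [step1]
  -- Step 2: Fubini
  have hcont : Continuous (Function.uncurry fun y u : ℝ =>
      stdNormalPdf y * (stdNormalPdf ((u + s * y) / t) / t)) := by
    apply Continuous.mul
    · exact continuous_stdNormalPdf.comp continuous_fst
    · exact (continuous_stdNormalPdf.comp (by fun_prop)).div_const t
  have hint : Integrable (Function.uncurry fun y u : ℝ =>
      stdNormalPdf y * (stdNormalPdf ((u + s * y) / t) / t))
      (volume.prod (volume.restrict (Iic A))) := by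
    rw [integrable_prod_iff hcont.aestronglyMeasurable]
    constructor
    · refine Filter.Eventually.of_forall fun y => ?_
      simp only [Function.uncurry]
      exact (((integrable_stdNormalPdf_affine (s * y) ht.ne').div_const t).const_mul
        (stdNormalPdf y)).integrableOn
    · apply Integrable.mono' integrable_stdNormalPdf
        (hcont.aestronglyMeasurable.norm.integral_prod_right')
      refine Filter.Eventually.of_forall fun y => ?_
      simp only [Function.uncurry]
      have hnn : 0 ≤ ∫ u in Iic A, ‖stdNormalPdf y * (stdNormalPdf ((u + s * y) / t) / t)‖ :=
        integral_nonneg fun u => norm_nonneg _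
      rw [Real.norm_of_nonneg hnn]
      have heq : ∀ u : ℝ, ‖stdNormalPdf y * (stdNormalPdf ((u + s * y) / t) / t)‖ =
          stdNormalPdf y * (stdNormalPdf ((u + s * y) / t) / t) := fun u => by
        rw [Real.norm_of_nonneg]
        have := stdNormalPdf_nonneg y
        have := stdNormalPdf_nonneg ((u + s * y) / t)
        positivity
      simp_rw [heq]
      calc ∫ u in Iic A, stdNormalPdf y * (stdNormalPdf ((u + s * y) / t) / t)
          ≤ ∫ u : ℝ, stdNormalPdf y * (stdNormalPdf ((u + s * y) / t) / t) := by
            apply setIntegral_le_integral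
            · exact (((integrable_stdNormalPdf_affine (s * y) ht.ne').div_const t).const_mul _)
            · refine Filter.Eventually.of_forall fun u => ?_
              have := stdNormalPdf_nonneg y
              have := stdNormalPdf_nonneg ((u + s * y) / t)
              positivity
        _ = stdNormalPdf y := by
            rw [integral_const_mul, integral_div,
              integral_stdNormalPdf_affine (s * y) ht, div_self ht.ne', mul_one]
  have swap := integral_integral_swap (μ := volume) (ν := volume.restrict (Iic A))
    (f := fun y u : ℝ => stdNormalPdf y * (stdNormalPdf ((u + s * y) / t) / t)) hint
  rw [swap]
  -- Step 3: compute the inner integral using symmetry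
  have step3 : ∀ u : ℝ, (∫ y : ℝ, stdNormalPdf y * (stdNormalPdf ((u + s * y) / t) / t))
      = stdNormalPdf u := by
    intro u
    have hsymm : ∀ y : ℝ, stdNormalPdf y * (stdNormalPdf ((u + s * y) / t) / t) =
        stdNormalPdf u * stdNormalPdf ((y + s * u) / t) / t := by
      intro y
      rw [mul_div_assoc']
      congr 1
      exact pdf_symm hst ht.ne' y u
    simp_rw [hsymm]
    rw [integral_div, integral_const_mul, integral_stdNormalPdf_affine (s * u) ht]
    field_simp
  simp_rw [step3]
  rw [← stdNormalCdf_le_one_aux]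
  exact hAp
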